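/- Let G be a finite graph with arboricity a ≥ 2 and n vertices, and ε with 0 < ε ≤ 2. With G_i defined by iteratively removing all vertices of degree at most (2+ε)·a, after i = ⌈(2/ε)·log₂ a⌉ iterations the remaining graph G_i has at most (2/(2+ε))^i · n · a ≤ C·n edges for a constant C depending only on ε. -/

import Mathlib

open Finset
open scoped Classical

/-- `G` admits a partition of its edge set into at most `a` forests. -/
def HasForestDecomp {V : Type*} (G : SimpleGraph V) (a : ℕ) : Prop :=
  ∃ F : Fin a → SimpleGraph V,
    (∀ i, F i ≤ G ∧ (F i).IsAcyclic) ∧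
    ∀ e ∈ G.edgeSet, ∃! i, e ∈ (F i).edgeSet

/-- The arboricity of a graph: the minimum number of forests partitioning its edge set. -/
noncomputable def arboricity {V : Type*} (G : SimpleGraph V) : ℕ :=
  sInf {a | HasForestDecomp G a}

/-- `peel G a ε i` is the vertex set of the graph `G_i`: `G_0 = G`, and `G_{i+1}` is the
subgraph of `G_i` induced by the vertices whose degree in `G_i` exceeds `(2+ε)·a`,
i.e. `G_{i+1}` is obtained by removing all vertices of degree at most `(2+ε)·a`. -/
noncomputable def peel {V : Type*} [Fintype V] (G : SimpleGraph V) (a : ℕ) (ε : ℝ) :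
    ℕ → Finset V
  | 0 => Finset.univ
  | (i + 1) => (peel G a ε i).filter
      (fun v => (2 + ε) * a < (((peel G a ε i).filter (fun u => G.Adj v u)).card : ℝ))

/-- The number of edges of `G` with both endpoints in `S`, i.e. the number of edges of
the subgraph of `G` induced by `S`. -/
noncomputable def inducedEdgeCount {V : Type*} [Fintype V] [DecidableEq V]
    (G : SimpleGraph V) [DecidableRel G.Adj] (S : Finset V) : ℕ :=
  (G.edgeFinset.filter (fun e => ∀ v ∈ e, v ∈ S)).card

/-- For `0 < ε ≤ 2` there is a constant `C` (depending only on `ε`) such that for every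
finite graph `G` with arboricity `a ≥ 2` on `n` vertices, after
`i = ⌈(2/ε)·log₂ a⌉` iterations of removing all vertices of degree at most `(2+ε)·a`,
the remaining graph `G_i` has at most `(2/(2+ε))^i · n · a ≤ C·n` edges. -/
lemma firstEdge_unique {V : Type*} {G : SimpleGraph V} {a b : V} (p : G.Walk a b)
    (hp : p.IsPath) {e e' : Sym2 V} (he : e ∈ p.edges) (he' : e' ∈ p.edges)
    (hae : a ∈ e) (hae' : a ∈ e') : e = e' := by
  cases p with
  | nil => simp at he
  | cons h q =>
    rw [SimpleGraph.Walk.cons_isPath_iff] at hp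
    have key : ∀ f ∈ q.edges, a ∉ f := by
      intro f hf haf
      apply hp.2
      induction f with
      | _ x y =>
        rcases Sym2.mem_iff.mp haf with rfl | rfl
        · exact q.fst_mem_support_of_mem_edges hf
        · exact q.snd_mem_support_of_mem_edges hf
    rw [SimpleGraph.Walk.edges_cons, List.mem_cons] at he he'
    rcases he with rfl | he
    · rcases he' with rfl | he'
      · rfl
      · exact absurd hae' (key _ he')
    · exact absurd hae (key _ he)

lemma exists_endpoint {V : Type*} {G : SimpleGraph V} (hG : G.IsAcyclic) {e : Sym2 V}
    (he : e ∈ G.edgeSet) :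
    ∃ x, x ∈ e ∧ ∃ p : G.Walk x ((G.connectedComponentMk x).out), p.IsPath ∧ e ∈ p.edges := by
  induction e with
  | _ u v =>
  have hadj : G.Adj u v := he
  have hcomp : G.connectedComponentMk u = G.connectedComponentMk v :=
    SimpleGraph.ConnectedComponent.connectedComponentMk_eq_of_adj hadj
  set r := (G.connectedComponentMk u).out with hr
  have hru : G.Reachable u r := by
    apply SimpleGraph.ConnectedComponent.exact
    exact (Quot.out_eq _).symm
  obtain ⟨p₀, hp₀⟩ : ∃ p : G.Walk u r, p.IsPath := ⟨hru.some.toPath, hru.some.toPath.2⟩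
  by_cases hein : s(u, v) ∈ p₀.edges
  · exact ⟨u, by simp, p₀, hp₀, hein⟩
  · have hv : v ∉ p₀.support := by
      intro hv
      have huniq := hG.path_unique ⟨p₀.takeUntil v hv, hp₀.takeUntil hv⟩
        (SimpleGraph.Path.singleton hadj)
      apply hein
      apply p₀.edges_takeUntil_subset hv
      rw [show p₀.takeUntil v hv = (SimpleGraph.Path.singleton hadj : G.Walk u v) from
        congrArg Subtype.val huniq]
      simp [SimpleGraph.Path.singleton]
    refine ⟨v, by simp, ?_⟩
    have hr' : (G.connectedComponentMk v).out = r := by rw [← hcomp]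
    refine ⟨(SimpleGraph.Walk.cons hadj.symm p₀).copy rfl hr'.symm, ?_, ?_⟩
    · rw [SimpleGraph.Walk.isPath_copy]
      exact hp₀.cons hv
    · rw [SimpleGraph.Walk.edges_copy, SimpleGraph.Walk.edges_cons]
      simp [Sym2.eq_swap]

lemma acyclic_of_edge_subset {V : Type*} {G : SimpleGraph V} (e₀ : Sym2 V)
    (h : G.edgeSet ⊆ {e₀}) : G.IsAcyclic := by
  intro v c hc
  have h3 := hc.three_le_length
  have hnodup := hc.edges_nodup
  have hlen : c.edges.length = c.length := c.length_edges
  rcases hE : c.edges with _ | ⟨a, _ | ⟨b, l⟩⟩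
  · rw [hE] at hlen; simp at hlen; omega
  · rw [hE] at hlen; simp at hlen; omega
  · rw [hE] at hnodup
    have ha : a ∈ G.edgeSet := c.edges_subset_edgeSet (by rw [hE]; simp)
    have hb : b ∈ G.edgeSet := c.edges_subset_edgeSet (by rw [hE]; simp)
    have : a = b := by
      have := h ha; have := h hb; simp_all
    simp [this] at hnodup

lemma acyclic_filter_card_le {V : Type*} [Fintype V] {G : SimpleGraph V} [Fintype G.edgeSet]
    (hG : G.IsAcyclic) (S : Finset V) :
    (G.edgeFinset.filter (fun e => ∀ v ∈ e, v ∈ S)).card ≤ S.card := by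
  have H : ∀ e : Sym2 V, ∃ x, e ∈ G.edgeSet →
      x ∈ e ∧ ∃ p : G.Walk x ((G.connectedComponentMk x).out), p.IsPath ∧ e ∈ p.edges := by
    intro e
    by_cases he : e ∈ G.edgeSet
    · obtain ⟨x, hx⟩ := exists_endpoint hG he
      exact ⟨x, fun _ => hx⟩
    · exact ⟨(Quot.out e).1, fun h => absurd h he⟩
  choose f hf using H
  apply Finset.card_le_card_of_injOn f
  · intro e he
    rw [Finset.mem_coe, Finset.mem_filter, SimpleGraph.mem_edgeFinset] at he
    exact he.2 _ (hf e he.1).1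
  · intro e he e' he' hee
    rw [Finset.coe_filter, Set.mem_setOf_eq, SimpleGraph.mem_edgeFinset] at he he'
    obtain ⟨hx, p, hp, hep⟩ := hf e he.1
    obtain ⟨hx', p', hp', hep'⟩ := hf e' he'.1
    rw [hee] at hx
    have hq : (p.copy hee (by rw [hee])).IsPath := by
      rw [SimpleGraph.Walk.isPath_copy]; exact hp
    have heq : e ∈ (p.copy hee (by rw [hee])).edges := by
      rw [SimpleGraph.Walk.edges_copy]; exact hep
    have hpq : (⟨p.copy hee (by rw [hee]), hq⟩ : SimpleGraph.Path _ _ _) = ⟨p', hp'⟩ :=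
      hG.path_unique _ _
    have hcast : p.copy hee (by rw [hee]) = p' := congrArg Subtype.val hpq
    rw [hcast] at heq
    exact firstEdge_unique p' hp' heq hep' hx hx'

lemma hasForestDecomp_card {V : Type*} [Fintype V] (G : SimpleGraph V) [Fintype G.edgeSet] :
    HasForestDecomp G G.edgeFinset.card := by
  refine ⟨fun i => SimpleGraph.fromEdgeSet {(G.edgeFinset.equivFin.symm i : Sym2 V)}, ?_, ?_⟩
  · intro i
    constructor
    · calc SimpleGraph.fromEdgeSet {(G.edgeFinset.equivFin.symm i : Sym2 V)}
          ≤ SimpleGraph.fromEdgeSet G.edgeSet := by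
            apply SimpleGraph.fromEdgeSet_mono
            intro e he
            rw [Set.mem_singleton_iff] at he
            subst he
            exact SimpleGraph.mem_edgeFinset.mp (G.edgeFinset.equivFin.symm i).2
        _ = G := SimpleGraph.fromEdgeSet_edgeSet G
    · apply acyclic_of_edge_subset ((G.edgeFinset.equivFin.symm i : Sym2 V))
      rw [SimpleGraph.edgeSet_fromEdgeSet]
      exact Set.diff_subset
  · intro e he
    have hemem : e ∈ G.edgeFinset := SimpleGraph.mem_edgeFinset.mpr he
    have hnd : ¬ e.IsDiag := SimpleGraph.not_isDiag_of_mem_edgeSet G he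
    have key : ∀ i, e ∈ (SimpleGraph.fromEdgeSet
        {(G.edgeFinset.equivFin.symm i : Sym2 V)}).edgeSet ↔
        G.edgeFinset.equivFin.symm i = ⟨e, hemem⟩ := by
      intro i
      rw [SimpleGraph.edgeSet_fromEdgeSet, Set.mem_diff, Set.mem_singleton_iff]
      constructor
      · rintro ⟨rfl, -⟩; rfl
      · rintro h; rw [h]; exact ⟨rfl, hnd⟩
    refine ⟨G.edgeFinset.equivFin ⟨e, hemem⟩, ?_, ?_⟩
    · show e ∈ _
      rw [key]; simp
    · intro j hj
      replace hj : e ∈ _ := hj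
      rw [key] at hj
      rw [← hj]; simp

lemma inducedEdgeCount_le {V : Type*} [Fintype V] [DecidableEq V] (G : SimpleGraph V)
    [DecidableRel G.Adj] {a : ℕ} (ha : arboricity G = a) (S : Finset V) :
    inducedEdgeCount G S ≤ a * S.card := by
  have hne : {b | HasForestDecomp G b}.Nonempty := ⟨_, hasForestDecomp_card G⟩
  have hmem : HasForestDecomp G a := ha ▸ Nat.sInf_mem hne
  obtain ⟨F, hF, huniq⟩ := hmem
  have hsub : G.edgeFinset.filter (fun e => ∀ v ∈ e, v ∈ S) ⊆
      Finset.univ.biUnion (fun i : Fin a =>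
        (F i).edgeFinset.filter (fun e => ∀ v ∈ e, v ∈ S)) := by
    intro e he
    rw [Finset.mem_filter, SimpleGraph.mem_edgeFinset] at he
    obtain ⟨i, hi, -⟩ := huniq e he.1
    refine Finset.mem_biUnion.mpr ⟨i, Finset.mem_univ _, ?_⟩
    rw [Finset.mem_filter, SimpleGraph.mem_edgeFinset]
    exact ⟨hi, he.2⟩
  unfold inducedEdgeCount
  calc (G.edgeFinset.filter (fun e => ∀ v ∈ e, v ∈ S)).card ≤ _ := Finset.card_le_card hsub
    _ ≤ ∑ i : Fin a, ((F i).edgeFinset.filter (fun e => ∀ v ∈ e, v ∈ S)).card :=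
        Finset.card_biUnion_le
    _ ≤ ∑ _i : Fin a, S.card := Finset.sum_le_sum (fun i _ => by convert acyclic_filter_card_le (hF i).2 S using 2 <;> (ext; simp))
    _ = a * S.card := by simp [Finset.sum_const, mul_comm]

lemma handshake {V : Type*} [Fintype V] [DecidableEq V] (G : SimpleGraph V)
    [DecidableRel G.Adj] (S : Finset V) :
    ∑ v ∈ S, (S.filter (fun u => G.Adj v u)).card = 2 * inducedEdgeCount G S := by
  have h1 : ∑ v ∈ S, (S.filter (fun u => G.Adj v u)).card
      = ((S ×ˢ S).filter (fun p => G.Adj p.1 p.2)).card := by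
    rw [Finset.card_filter, Finset.sum_product]
    refine Finset.sum_congr rfl (fun v _ => ?_)
    rw [Finset.card_filter]
  rw [h1, Finset.card_eq_sum_card_fiberwise
    (f := fun p : V × V => s(p.1, p.2))
    (t := G.edgeFinset.filter (fun e => ∀ v ∈ e, v ∈ S)) ?_]
  · have h2 : ∀ e ∈ G.edgeFinset.filter (fun e => ∀ v ∈ e, v ∈ S),
        (((S ×ˢ S).filter (fun p => G.Adj p.1 p.2)).filter
          (fun a => s(a.1, a.2) = e)).card = 2 := by
      intro e he
      revert he
      induction e with
      | _ u v =>
      intro he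
      rw [Finset.mem_filter, SimpleGraph.mem_edgeFinset] at he
      have hadj : G.Adj u v := he.1
      have hu : u ∈ S := he.2 _ (by simp)
      have hv : v ∈ S := he.2 _ (by simp)
      have hset : (((S ×ˢ S).filter (fun p => G.Adj p.1 p.2)).filter
          (fun a => s(a.1, a.2) = s(u, v))) = {(u, v), (v, u)} := by
        ext ⟨p1, p2⟩
        simp only [Finset.mem_filter, Finset.mem_product, Finset.mem_insert,
          Finset.mem_singleton, Sym2.eq_iff, Prod.mk.injEq]
        constructor
        · rintro ⟨⟨-, -⟩, (⟨rfl, rfl⟩ | ⟨rfl, rfl⟩)⟩ <;> simp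
        · rintro (⟨rfl, rfl⟩ | ⟨rfl, rfl⟩) <;>
            simp [hu, hv, hadj, hadj.symm]
      rw [hset, Finset.card_insert_of_notMem (by simp [hadj.ne]), Finset.card_singleton]
    rw [Finset.sum_congr rfl h2, Finset.sum_const, smul_eq_mul, mul_comm, inducedEdgeCount]
  · intro p hp
    rw [Finset.mem_coe, Finset.mem_filter, Finset.mem_product] at hp
    rw [Finset.mem_coe, Finset.mem_filter, SimpleGraph.mem_edgeFinset]
    refine ⟨hp.2, ?_⟩
    intro v hv
    rcases Sym2.mem_iff.mp hv with rfl | rfl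
    · exact hp.1.1
    · exact hp.1.2

lemma calc_key {ε : ℝ} (hε0 : 0 < ε) (hε2 : ε ≤ 2) {a : ℕ} (ha : 2 ≤ a) :
    (2 / (2 + ε)) ^ (⌈(2 / ε) * Real.logb 2 a⌉₊) * (a : ℝ) ≤ 1 := by
  set i := ⌈(2 / ε) * Real.logb 2 a⌉₊ with hi
  have ha1 : (2:ℝ) ≤ (a:ℝ) := by exact_mod_cast ha
  have hlog2 : (0:ℝ) < Real.log 2 := Real.log_pos (by norm_num)
  have hloga : 0 ≤ Real.logb 2 a := Real.logb_nonneg (by norm_num) (by linarith)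
  have hile : (2 / ε) * Real.logb 2 a ≤ (i : ℝ) := Nat.le_ceil _
  have h1t : (0:ℝ) < 1 + ε / 2 := by linarith
  -- convexity of exp
  have hcvx := (convexOn_exp).2 (Set.mem_univ (0:ℝ)) (Set.mem_univ (Real.log 2))
    (show (0:ℝ) ≤ 1 - ε/2 by linarith) (show (0:ℝ) ≤ ε/2 by linarith)
    (show (1 - ε/2) + ε/2 = 1 by ring)
  simp only [smul_eq_mul, mul_zero, zero_add, Real.exp_zero, mul_one,
    Real.exp_log (by norm_num : (0:ℝ) < 2)] at hcvx
  have key1 : Real.exp ((ε/2) * Real.log 2) ≤ 1 + ε/2 := by linarith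
  have key2 : (ε/2) * Real.log 2 ≤ Real.log (1 + ε/2) :=
    (Real.le_log_iff_exp_le h1t).mpr key1
  have key3 : Real.log a ≤ (i : ℝ) * Real.log (1 + ε/2) := by
    have e1 : Real.log a = Real.logb 2 a * Real.log 2 := by
      rw [Real.logb, div_mul_cancel₀]
      exact ne_of_gt hlog2
    have e2 : Real.logb 2 a * Real.log 2 = ((2/ε) * Real.logb 2 a) * ((ε/2) * Real.log 2) := by
      field_simp
    rw [e1, e2]
    apply mul_le_mul hile key2 (by positivity) (by positivity)
  have key4 : (a : ℝ) ≤ (1 + ε/2) ^ i := by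
    have := Real.log_pow (1 + ε/2) i
    rw [← this] at key3
    exact (Real.log_le_log_iff (by linarith) (by positivity)).mp key3
  have hne1 : (2:ℝ) + ε ≠ 0 := by linarith
  have hne2 : (1:ℝ) + ε/2 ≠ 0 := by linarith
  have hrw : (2:ℝ) / (2 + ε) = (1 + ε/2)⁻¹ := by
    rw [inv_eq_one_div, div_eq_div_iff hne1 hne2]
    ring
  rw [hrw, inv_pow, inv_mul_le_iff₀ (by positivity), mul_one]
  exact key4

lemma peel_succ_card {V : Type*} [Fintype V] [DecidableEq V] (G : SimpleGraph V)
    [DecidableRel G.Adj] {a : ℕ} (hIE : ∀ S : Finset V, inducedEdgeCount G S ≤ a * S.card)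
    (ha : 1 ≤ a) {ε : ℝ} (hε0 : 0 < ε) (i : ℕ) :
    ((peel G a ε (i + 1)).card : ℝ) ≤ 2 / (2 + ε) * (peel G a ε i).card := by
  set S := peel G a ε i with hS
  set T := peel G a ε (i + 1) with hT
  have hsub : T ⊆ S := Finset.filter_subset _ _
  have h1 : (2 + ε) * a * (T.card : ℝ) ≤
      ∑ v ∈ T, ((S.filter (fun u => G.Adj v u)).card : ℝ) := by
    have := Finset.card_nsmul_le_sum T (fun v => ((S.filter (fun u => G.Adj v u)).card : ℝ))
      ((2 + ε) * a) (fun v hv => by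
        rw [hT, peel, Finset.mem_filter, ← hS] at hv
        have h := hv.2
        refine le_of_lt (lt_of_lt_of_le h (le_of_eq ?_))
        congr 1
        congr!)
    rw [nsmul_eq_mul] at this
    linarith [this]
  have h2 : ∑ v ∈ T, ((S.filter (fun u => G.Adj v u)).card : ℝ) ≤
      ∑ v ∈ S, ((S.filter (fun u => G.Adj v u)).card : ℝ) :=
    Finset.sum_le_sum_of_subset_of_nonneg hsub (fun v _ _ => by positivity)
  have h3 : ∑ v ∈ S, ((S.filter (fun u => G.Adj v u)).card : ℝ)
      = 2 * (inducedEdgeCount G S : ℝ) := by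
    rw [← Nat.cast_sum, handshake G S]
    push_cast
    ring
  have h4 : (inducedEdgeCount G S : ℝ) ≤ (a : ℝ) * S.card := by
    exact_mod_cast hIE S
  have ha0 : (0 : ℝ) < a := by exact_mod_cast Nat.lt_of_lt_of_le Nat.zero_lt_one ha
  have h2ε : (0 : ℝ) < 2 + ε := by linarith
  rw [div_mul_eq_mul_div, le_div_iff₀ h2ε]
  nlinarith [h1, h2, h3, h4]

lemma peel_card_pow {V : Type*} [Fintype V] [DecidableEq V] (G : SimpleGraph V)
    [DecidableRel G.Adj] {a : ℕ} (hIE : ∀ S : Finset V, inducedEdgeCount G S ≤ a * S.card)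
    (ha : 1 ≤ a) {ε : ℝ} (hε0 : 0 < ε) (i : ℕ) :
    ((peel G a ε i).card : ℝ) ≤ (2 / (2 + ε)) ^ i * (Fintype.card V : ℝ) := by
  induction i with
  | zero => simp [peel]
  | succ n ih =>
    have h2ε : (0 : ℝ) < 2 + ε := by linarith
    calc ((peel G a ε (n + 1)).card : ℝ) ≤ 2 / (2 + ε) * (peel G a ε n).card :=
          peel_succ_card G hIE ha hε0 n
      _ ≤ 2 / (2 + ε) * ((2 / (2 + ε)) ^ n * (Fintype.card V : ℝ)) := by
          apply mul_le_mul_of_nonneg_left ih (by positivity)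
      _ = (2 / (2 + ε)) ^ (n + 1) * (Fintype.card V : ℝ) := by ring

theorem stmt5 (ε : ℝ) (hε0 : 0 < ε) (hε2 : ε ≤ 2) :
    ∃ C : ℝ, ∀ (V : Type) (_ : Fintype V) (_ : DecidableEq V)
      (G : SimpleGraph V) (_ : DecidableRel G.Adj) (a : ℕ),
      arboricity G = a → 2 ≤ a →
      (inducedEdgeCount G (peel G a ε (⌈(2 / ε) * Real.logb 2 a⌉₊)) : ℝ) ≤
          (2 / (2 + ε)) ^ (⌈(2 / ε) * Real.logb 2 a⌉₊) * (Fintype.card V : ℝ) * a ∧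
        (2 / (2 + ε)) ^ (⌈(2 / ε) * Real.logb 2 a⌉₊) * (Fintype.card V : ℝ) * a ≤
          C * (Fintype.card V : ℝ) := by
  refine ⟨1, ?_⟩
  intro V iV dV G dG a ha ha2
  set i := ⌈(2 / ε) * Real.logb 2 (a : ℝ)⌉₊ with hidef
  have hIE : ∀ S : Finset V, inducedEdgeCount G S ≤ a * S.card :=
    fun S => inducedEdgeCount_le G ha S
  have ha1 : 1 ≤ a := le_trans (by norm_num) ha2
  have hpow := peel_card_pow G hIE ha1 hε0 i
  constructor
  · calc (inducedEdgeCount G (peel G a ε i) : ℝ)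
        ≤ (a : ℝ) * ((peel G a ε i).card : ℝ) := by exact_mod_cast hIE _
      _ ≤ (a : ℝ) * ((2 / (2 + ε)) ^ i * (Fintype.card V : ℝ)) :=
          mul_le_mul_of_nonneg_left hpow (by positivity)
      _ = (2 / (2 + ε)) ^ i * (Fintype.card V : ℝ) * a := by ring
  · have hkey := calc_key hε0 hε2 ha2
    have hn : (0 : ℝ) ≤ (Fintype.card V : ℝ) := by positivity
    calc (2 / (2 + ε)) ^ i * (Fintype.card V : ℝ) * a
        = ((2 / (2 + ε)) ^ i * a) * (Fintype.card V : ℝ) := by ring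
      _ ≤ 1 * (Fintype.card V : ℝ) := mul_le_mul_of_nonneg_right hkey hn
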